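/- Let d ≥ 5. There exists a constant C > 0, depending only on d, such that for all u, v, y ∈ ℤ^d: Σ_{a,b∈ℤ^d} ⟨u−a⟩^{2−d} ⟨y−a⟩^{4−2d} ⟨b−a⟩^{2−d} ⟨v−b⟩^{4−2d} ⟨y−b⟩^{2−d} ≤ C ⟨y−u⟩^{2−d} ⟨y−v⟩^{4−2d}. -/

import Mathlib

open scoped BigOperators

/-- Euclidean norm of a point of `ℤ^d`. -/
noncomputable def znorm {d : ℕ} (x : Fin d → ℤ) : ℝ :=
  Real.sqrt (∑ i, ((x i : ℝ)) ^ 2)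

/-- `⟨x⟩ = max(|x|, 1)`. -/
noncomputable def zbra {d : ℕ} (x : Fin d → ℤ) : ℝ := max (znorm x) 1

namespace Stmt12Aux

variable {d : ℕ}

lemma znorm_nonneg (x : Fin d → ℤ) : 0 ≤ znorm x := Real.sqrt_nonneg _

lemma one_le_zbra (x : Fin d → ℤ) : 1 ≤ zbra x := le_max_right _ _

lemma zbra_pos (x : Fin d → ℤ) : 0 < zbra x := lt_of_lt_of_le one_pos (one_le_zbra x)

/-- embedding into Euclidean space -/
noncomputable def emb (x : Fin d → ℤ) : EuclideanSpace ℝ (Fin d) :=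
  (WithLp.equiv 2 (Fin d → ℝ)).symm (fun i => (x i : ℝ))

lemma znorm_eq_norm (x : Fin d → ℤ) : znorm x = ‖emb x‖ := by
  rw [EuclideanSpace.norm_eq]
  unfold znorm
  congr 1
  refine Finset.sum_congr rfl fun i _ => ?_
  have : emb x i = (x i : ℝ) := rfl
  rw [this, Real.norm_eq_abs, sq_abs]

lemma znorm_add_le (x y : Fin d → ℤ) : znorm (x + y) ≤ znorm x + znorm y := by
  rw [znorm_eq_norm, znorm_eq_norm, znorm_eq_norm]
  have : emb (x + y) = emb x + emb y := by
    ext i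
    show ((x + y) i : ℝ) = (x i : ℝ) + (y i : ℝ)
    push_cast [Pi.add_apply]
    ring
  rw [this]
  exact norm_add_le _ _

lemma znorm_neg (x : Fin d → ℤ) : znorm (-x) = znorm x := by
  unfold znorm
  congr 1
  refine Finset.sum_congr rfl fun i _ => ?_
  simp [Pi.neg_apply]

lemma zbra_neg (x : Fin d → ℤ) : zbra (-x) = zbra x := by
  unfold zbra; rw [znorm_neg]

lemma zbra_sub_comm (x y : Fin d → ℤ) : zbra (x - y) = zbra (y - x) := by
  rw [← zbra_neg (x - y), neg_sub]

lemma zbra_add_le (x y : Fin d → ℤ) : zbra (x + y) ≤ zbra x + zbra y := by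
  unfold zbra
  refine max_le ?_ ?_
  · exact le_trans (znorm_add_le x y)
      (add_le_add (le_max_left _ _) (le_max_left _ _))
  · have h1 : (1:ℝ) ≤ max (znorm x) 1 := le_max_right _ _
    have h2 : (0:ℝ) ≤ max (znorm y) 1 := le_trans zero_le_one (le_max_right _ _)
    linarith

/-- triangle for differences: `⟨x-z⟩ ≤ ⟨x-y⟩ + ⟨y-z⟩`. -/
lemma zbra_triangle (x y z : Fin d → ℤ) : zbra (x - z) ≤ zbra (x - y) + zbra (y - z) := by
  have : x - z = (x - y) + (y - z) := by abel
  rw [this]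
  exact zbra_add_le _ _

lemma half_le_or (x y z : Fin d → ℤ) :
    zbra (x - z) / 2 ≤ zbra (x - y) ∨ zbra (x - z) / 2 ≤ zbra (y - z) := by
  by_contra h
  push_neg at h
  have := zbra_triangle x y z
  linarith [h.1, h.2]


lemma coord_le (x : Fin d → ℤ) (i : Fin d) : (1 + |(x i : ℝ)|) ≤ 2 * zbra x := by
  have h1 : |(x i : ℝ)| ≤ znorm x := by
    unfold znorm
    rw [← Real.sqrt_sq_eq_abs]
    apply Real.sqrt_le_sqrt
    exact Finset.single_le_sum (f := fun j => ((x j : ℝ)) ^ 2)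
      (fun j _ => sq_nonneg _) (Finset.mem_univ i)
  have h2 := one_le_zbra x
  have h3 : znorm x ≤ zbra x := le_max_left _ _
  linarith

lemma prod_le_pow (x : Fin d → ℤ) :
    ∏ i : Fin d, (1 + |(x i : ℝ)|) ≤ (2 * zbra x) ^ d := by
  calc ∏ i : Fin d, (1 + |(x i : ℝ)|) ≤ ∏ _i : Fin d, (2 * zbra x) :=
        Finset.prod_le_prod (fun i _ => by positivity) (fun i _ => coord_le x i)
    _ = (2 * zbra x) ^ d := by
        rw [Finset.prod_const, Finset.card_univ, Fintype.card_fin]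

lemma zbra_rpow_le_prod (hd : 0 < d) (x : Fin d → ℤ) {s : ℝ} (hs : s ≤ 0) :
    zbra x ^ s ≤ (2:ℝ) ^ (-s) * ∏ i, (1 + |(x i : ℝ)|) ^ (s / d) := by
  have hPpos : (0:ℝ) < ∏ i : Fin d, (1 + |(x i : ℝ)|) :=
    Finset.prod_pos fun i _ => by positivity
  have hzb := zbra_pos x
  have h1 : ∏ i : Fin d, (1 + |(x i : ℝ)|) ≤ (2 * zbra x) ^ (d:ℝ) := by
    rw [Real.rpow_natCast]
    exact prod_le_pow x
  have h2 : ((2 * zbra x) ^ (d:ℝ)) ^ (s / d) ≤ (∏ i : Fin d, (1 + |(x i : ℝ)|)) ^ (s / d) :=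
    Real.rpow_le_rpow_of_nonpos hPpos h1 (div_nonpos_of_nonpos_of_nonneg hs (by positivity))
  have h3 : ((2 * zbra x) ^ (d:ℝ)) ^ (s / d) = (2 * zbra x) ^ s := by
    rw [← Real.rpow_mul (by positivity)]
    congr 1
    field_simp
  have h4 : (2 * zbra x) ^ s = (2:ℝ) ^ s * zbra x ^ s :=
    Real.mul_rpow (by norm_num) hzb.le
  have h5 : (∏ i : Fin d, (1 + |(x i : ℝ)|)) ^ (s / d)
      = ∏ i, (1 + |(x i : ℝ)|) ^ (s / d) :=
    (Real.finset_prod_rpow _ _ (fun i _ => by positivity) _).symm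
  have h6 : (2:ℝ) ^ s * zbra x ^ s ≤ ∏ i, (1 + |(x i : ℝ)|) ^ (s / d) := by
    rw [← h4, ← h3, ← h5]; exact h2
  have h7 : (0:ℝ) < (2:ℝ) ^ (-s) := Real.rpow_pos_of_pos (by norm_num) _
  have h8 : (2:ℝ) ^ (-s) * ((2:ℝ) ^ s * zbra x ^ s) = zbra x ^ s := by
    rw [← mul_assoc, ← Real.rpow_add (by norm_num)]
    simp
  calc zbra x ^ s = (2:ℝ) ^ (-s) * ((2:ℝ) ^ s * zbra x ^ s) := h8.symm
    _ ≤ (2:ℝ) ^ (-s) * ∏ i, (1 + |(x i : ℝ)|) ^ (s / d) := by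
        exact mul_le_mul_of_nonneg_left h6 h7.le

lemma summable_int_weight {t : ℝ} (ht : t < -1) :
    Summable (fun n : ℤ => (1 + |(n:ℝ)|) ^ t) := by
  have hnat : Summable (fun n : ℕ => (1 + (n:ℝ)) ^ t) := by
    have h0 : Summable (fun n : ℕ => ((n:ℝ)) ^ t) := Real.summable_nat_rpow.mpr ht
    have h2 := (summable_nat_add_iff (f := fun n : ℕ => ((n:ℝ)) ^ t) 1).2 h0
    refine h2.congr fun n => ?_
    push_cast
    ring_nf
  apply Summable.of_nat_of_neg
  · refine hnat.congr fun n => ?_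
    norm_num
  · refine hnat.congr fun n => ?_
    norm_num

set_option maxHeartbeats 1000000 in
lemma summable_prod_pi {t : ℝ} (ht : t < -1) (n : ℕ) :
    Summable (fun z : Fin n → ℤ => ∏ i, (1 + |(z i : ℝ)|) ^ t) := by
  induction n with
  | zero =>
      haveI : Subsingleton (Fin 0 → ℤ) := by infer_instance
      haveI : Finite (Fin 0 → ℤ) := Finite.of_subsingleton
      exact Summable.of_finite
  | succ n ih =>
      have hint : Summable (fun m : ℤ => (1 + |(m : ℝ)|) ^ t) := summable_int_weight ht
      have hF := Summable.mul_of_nonneg hint ih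
        (Pi.le_def.mpr fun m => by positivity)
        (Pi.le_def.mpr fun zz => Finset.prod_nonneg fun i _ => by positivity)
      have := (Equiv.summable_iff (Fin.consEquiv (fun _ : Fin (n+1) => ℤ))
        (f := fun z : Fin (n+1) → ℤ => ∏ i, (1 + |(z i : ℝ)|) ^ t)).1 ?_
      · exact this
      · refine hF.congr fun p => ?_
        simp only [Function.comp_apply, Fin.consEquiv_apply]
        rw [Fin.prod_univ_succ]
        simp [Fin.cons_zero, Fin.cons_succ]

lemma summable_zbra_rpow (hd0 : 0 < d) {s : ℝ} (hs : s < -(d:ℝ)) :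
    Summable (fun z : Fin d → ℤ => zbra z ^ s) := by
  have hdr : (0:ℝ) < d := by exact_mod_cast hd0
  have hs0 : s ≤ 0 := by nlinarith
  have ht : s / d < -1 := by
    rw [div_lt_iff₀ hdr]
    nlinarith
  have hsum := summable_prod_pi ht d
  have hsum2 := hsum.mul_left ((2:ℝ) ^ (-s))
  exact Summable.of_nonneg_of_le
    (fun z => Real.rpow_nonneg (zbra_pos z).le _)
    (fun z => zbra_rpow_le_prod hd0 z hs0) hsum2


lemma zbra_zero : zbra (0 : Fin d → ℤ) = 1 := by
  have h : znorm (0 : Fin d → ℤ) = 0 := by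
    unfold znorm
    simp
  unfold zbra
  rw [h]
  exact max_eq_right zero_le_one

lemma G_le_of_half_le {q : ℝ} (hq : q ≤ 0) {w x : Fin d → ℤ} (h : zbra w / 2 ≤ zbra x) :
    zbra x ^ q ≤ (2:ℝ) ^ (-q) * zbra w ^ q := by
  have hw := zbra_pos w
  have h1 : zbra x ^ q ≤ (zbra w / 2) ^ q :=
    Real.rpow_le_rpow_of_nonpos (by positivity) h hq
  have h2 : (zbra w / 2) ^ q = zbra w ^ q / (2:ℝ) ^ q := Real.div_rpow hw.le (by norm_num) q
  have h3 : zbra w ^ q / (2:ℝ) ^ q = (2:ℝ) ^ (-q) * zbra w ^ q := by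
    rw [Real.rpow_neg (by norm_num : (0:ℝ) ≤ 2)]
    have : ((2:ℝ) ^ q) ≠ 0 := ne_of_gt (Real.rpow_pos_of_pos (by norm_num) q)
    field_simp
  rw [h2, h3] at h1
  exact h1

end Stmt12Aux

set_option maxHeartbeats 2000000 in
open Stmt12Aux in
/-- For `d ≥ 5` there is `C > 0`, depending only on `d`, such that for all
`u, v, y ∈ ℤ^d`:
`Σ_{a,b} ⟨u−a⟩^{2−d}⟨y−a⟩^{4−2d}⟨b−a⟩^{2−d}⟨v−b⟩^{4−2d}⟨y−b⟩^{2−d}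
  ≤ C ⟨y−u⟩^{2−d} ⟨y−v⟩^{4−2d}`. -/
theorem stmt_12 (d : ℕ) (hd : 5 ≤ d) :
    ∃ C > (0 : ℝ), ∀ u v y : Fin d → ℤ,
      Summable (fun p : (Fin d → ℤ) × (Fin d → ℤ) =>
        zbra (u - p.1) ^ ((2 : ℝ) - d) * zbra (y - p.1) ^ ((4 : ℝ) - 2 * d) *
          zbra (p.2 - p.1) ^ ((2 : ℝ) - d) * zbra (v - p.2) ^ ((4 : ℝ) - 2 * d) *
          zbra (y - p.2) ^ ((2 : ℝ) - d)) ∧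
      (∑' p : (Fin d → ℤ) × (Fin d → ℤ),
        zbra (u - p.1) ^ ((2 : ℝ) - d) * zbra (y - p.1) ^ ((4 : ℝ) - 2 * d) *
          zbra (p.2 - p.1) ^ ((2 : ℝ) - d) * zbra (v - p.2) ^ ((4 : ℝ) - 2 * d) *
          zbra (y - p.2) ^ ((2 : ℝ) - d))
        ≤ C * zbra (y - u) ^ ((2 : ℝ) - d) * zbra (y - v) ^ ((4 : ℝ) - 2 * d) := by
  classical
  have hd0 : 0 < d := by omega
  have hdr : (5:ℝ) ≤ (d:ℝ) := by exact_mod_cast hd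
  set q : ℝ := (2:ℝ) - (d:ℝ) with hqdef
  have hq : q ≤ 0 := by rw [hqdef]; linarith
  have h2q : 2 * q < -(d:ℝ) := by rw [hqdef]; linarith
  -- positivity facts
  have hzpos : ∀ x : Fin d → ℤ, (0:ℝ) < zbra x ^ q :=
    fun x => Real.rpow_pos_of_pos (zbra_pos x) q
  have hzle1 : ∀ x : Fin d → ℤ, zbra x ^ q ≤ 1 :=
    fun x => Real.rpow_le_one_of_one_le_of_nonpos (one_le_zbra x) hq
  -- master summability
  have hSsum : Summable (fun z : Fin d → ℤ => (zbra z ^ q) ^ 2) := by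
    have hmain := summable_zbra_rpow hd0 h2q
    refine hmain.congr fun z => ?_
    rw [show (2:ℝ) * q = q * 2 by ring, Real.rpow_mul (zbra_pos z).le,
      show ((2:ℝ)) = ((2:ℕ):ℝ) by norm_num, Real.rpow_natCast]
  set S : ℝ := ∑' z : Fin d → ℤ, (zbra z ^ q) ^ 2 with hSdef
  have hS1 : 1 ≤ S := by
    have h := Summable.le_tsum hSsum 0 (fun j _ => sq_nonneg _)
    rw [zbra_zero, Real.one_rpow] at h
    simpa using h
  have hSpos : (0:ℝ) < S := lt_of_lt_of_le one_pos hS1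
  set c2 : ℝ := (2:ℝ) ^ (-q) with hc2def
  have hc2 : 0 < c2 := Real.rpow_pos_of_pos (by norm_num) _
  refine ⟨14 * c2 ^ 4 * S ^ 2, by positivity, ?_⟩
  intro u v y
  -- rewrite the double-weight exponents as squares
  have hbig : ∀ x : Fin d → ℤ, zbra x ^ ((4:ℝ) - 2 * (d:ℝ)) = (zbra x ^ q) ^ 2 := by
    intro x
    rw [show (4:ℝ) - 2 * (d:ℝ) = q * 2 by rw [hqdef]; ring,
      Real.rpow_mul (zbra_pos x).le, show ((2:ℝ)) = ((2:ℕ):ℝ) by norm_num,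
      Real.rpow_natCast]
  simp only [hbig]
  -- translated summability and tsum values
  have hsqc : ∀ c : Fin d → ℤ, Summable (fun a : Fin d → ℤ => (zbra (c - a) ^ q) ^ 2) :=
    fun c => (Equiv.subLeft c).summable_iff.2 hSsum
  have htsumc : ∀ c : Fin d → ℤ, ∑' a, (zbra (c - a) ^ q) ^ 2 = S :=
    fun c => (Equiv.subLeft c).tsum_eq (fun z : Fin d → ℤ => (zbra z ^ q) ^ 2)
  have hxy : ∀ x y : ℝ, 0 ≤ x → 0 ≤ y → x * y ≤ x ^ 2 + y ^ 2 := by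
    intro x y hx hy
    nlinarith [sq_nonneg (x - y)]
  -- pairwise sums
  have hpair_s : ∀ c c' : Fin d → ℤ,
      Summable (fun a : Fin d → ℤ => zbra (c - a) ^ q * zbra (c' - a) ^ q) := by
    intro c c'
    refine Summable.of_nonneg_of_le (fun a => mul_nonneg (hzpos _).le (hzpos _).le)
      (fun a => hxy _ _ (hzpos _).le (hzpos _).le) ((hsqc c).add (hsqc c'))
  have hpair : ∀ c c' : Fin d → ℤ,
      (∑' a, zbra (c - a) ^ q * zbra (c' - a) ^ q) ≤ 2 * S := by
    intro c c'
    calc (∑' a, zbra (c - a) ^ q * zbra (c' - a) ^ q)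
        ≤ ∑' a, ((zbra (c - a) ^ q) ^ 2 + (zbra (c' - a) ^ q) ^ 2) :=
          Summable.tsum_le_tsum (fun a => hxy _ _ (hzpos _).le (hzpos _).le)
            (hpair_s c c') ((hsqc c).add (hsqc c'))
      _ = S + S := by rw [Summable.tsum_add (hsqc c) (hsqc c'), htsumc, htsumc]
      _ = 2 * S := by ring
  -- extraction in two-case form
  have hext : ∀ w x : Fin d → ℤ, zbra w / 2 ≤ zbra x →
      zbra x ^ q ≤ c2 * zbra w ^ q := fun w x h => G_le_of_half_le hq h
  -- the summand as a product
  set F : (Fin d → ℤ) × (Fin d → ℤ) → ℝ := fun p =>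
    zbra (u - p.1) ^ q * (zbra (y - p.1) ^ q) ^ 2 * zbra (p.2 - p.1) ^ q *
      (zbra (v - p.2) ^ q) ^ 2 * zbra (y - p.2) ^ q with hFdef
  have hFnonneg : ∀ p, 0 ≤ F p := by
    intro p
    simp only [hFdef]
    have h1 := hzpos (u - p.1); have h2 := hzpos (y - p.1); have h3 := hzpos (p.2 - p.1)
    have h4 := hzpos (v - p.2); have h5 := hzpos (y - p.2)
    positivity
  have hFdom : ∀ p : (Fin d → ℤ) × (Fin d → ℤ),
      F p ≤ (zbra (y - p.1) ^ q) ^ 2 * (zbra (v - p.2) ^ q) ^ 2 := by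
    intro p
    have h1 := hzpos (u - p.1); have h2 := hzpos (y - p.1); have h3 := hzpos (p.2 - p.1)
    have h4 := hzpos (v - p.2); have h5 := hzpos (y - p.2)
    have l1 := hzle1 (u - p.1); have l3 := hzle1 (p.2 - p.1); have l5 := hzle1 (y - p.2)
    simp only [hFdef]
    calc zbra (u - p.1) ^ q * (zbra (y - p.1) ^ q) ^ 2 * zbra (p.2 - p.1) ^ q *
          (zbra (v - p.2) ^ q) ^ 2 * zbra (y - p.2) ^ q
        = ((zbra (y - p.1) ^ q) ^ 2 * (zbra (v - p.2) ^ q) ^ 2) *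
          (zbra (u - p.1) ^ q * zbra (p.2 - p.1) ^ q * zbra (y - p.2) ^ q) := by ring
      _ ≤ ((zbra (y - p.1) ^ q) ^ 2 * (zbra (v - p.2) ^ q) ^ 2) * 1 := by
          refine mul_le_mul_of_nonneg_left ?_ (by positivity)
          exact mul_le_one₀ (mul_le_one₀ l1 h3.le l3) h5.le l5
      _ = (zbra (y - p.1) ^ q) ^ 2 * (zbra (v - p.2) ^ q) ^ 2 := by ring
  have hFsum : Summable F := by
    refine Summable.of_nonneg_of_le hFnonneg hFdom ?_
    have := Summable.mul_of_nonneg (hsqc y) (hsqc v)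
      (Pi.le_def.mpr fun a => sq_nonneg _) (Pi.le_def.mpr fun b => sq_nonneg _)
    exact this
  constructor
  · exact hFsum
  · -- the tsum bound
    -- abbreviations
    have hRu : (0:ℝ) < zbra (y - u) ^ q := hzpos _
    have hYv : (0:ℝ) < zbra (y - v) ^ q := hzpos _
    -- Claim A : for every b, the inner sum over a
    have claimA_s : ∀ b : Fin d → ℤ, Summable
        (fun a : Fin d → ℤ => zbra (u - a) ^ q * (zbra (y - a) ^ q) ^ 2 * zbra (b - a) ^ q) := by
      intro b
      refine Summable.of_nonneg_of_le
        (fun a => mul_nonneg (mul_nonneg (hzpos _).le (sq_nonneg _)) (hzpos _).le)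
        (fun a => ?_) (hsqc y)
      calc zbra (u - a) ^ q * (zbra (y - a) ^ q) ^ 2 * zbra (b - a) ^ q
          = (zbra (y - a) ^ q) ^ 2 * (zbra (u - a) ^ q * zbra (b - a) ^ q) := by ring
        _ ≤ (zbra (y - a) ^ q) ^ 2 * 1 := by
            refine mul_le_mul_of_nonneg_left ?_ (sq_nonneg _)
            exact mul_le_one₀ (hzle1 _) (hzpos _).le (hzle1 _)
        _ = (zbra (y - a) ^ q) ^ 2 := by ring
    have hpsi_s : ∀ b : Fin d → ℤ, Summable
        (fun a : Fin d → ℤ => (zbra (y - a) ^ q) ^ 2 * zbra (b - a) ^ q) := by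
      intro b
      refine Summable.of_nonneg_of_le
        (fun a => mul_nonneg (sq_nonneg _) (hzpos _).le) (fun a => ?_) (hsqc y)
      exact mul_le_of_le_one_right (sq_nonneg _) (hzle1 _)
    -- inner auxiliary sum: ∑_a ⟨y-a⟩^{2q} ⟨b-a⟩^{q} ≤ 3 c2 S ⟨y-b⟩^q
    have claimA1 : ∀ b : Fin d → ℤ,
        (∑' a, (zbra (y - a) ^ q) ^ 2 * zbra (b - a) ^ q)
          ≤ 3 * c2 * S * zbra (y - b) ^ q := by
      intro b
      have hYb : (0:ℝ) < zbra (y - b) ^ q := hzpos _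
      have hpt : ∀ a : Fin d → ℤ,
          (zbra (y - a) ^ q) ^ 2 * zbra (b - a) ^ q
            ≤ c2 * zbra (y - b) ^ q * (zbra (y - a) ^ q * zbra (b - a) ^ q)
              + c2 * zbra (y - b) ^ q * (zbra (y - a) ^ q) ^ 2 := by
        intro a
        have hs1 : 0 ≤ c2 * zbra (y - b) ^ q * (zbra (y - a) ^ q * zbra (b - a) ^ q) := by
          refine mul_nonneg (mul_nonneg hc2.le hYb.le) (mul_nonneg (hzpos _).le (hzpos _).le)
        have hs2 : 0 ≤ c2 * zbra (y - b) ^ q * (zbra (y - a) ^ q) ^ 2 :=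
          mul_nonneg (mul_nonneg hc2.le hYb.le) (sq_nonneg _)
        rcases half_le_or y a b with hc | hc
        · -- ⟨y-a⟩ is large
          have h1 : zbra (y - a) ^ q ≤ c2 * zbra (y - b) ^ q := hext _ _ hc
          have : (zbra (y - a) ^ q) ^ 2 * zbra (b - a) ^ q
              ≤ c2 * zbra (y - b) ^ q * (zbra (y - a) ^ q * zbra (b - a) ^ q) := by
            calc (zbra (y - a) ^ q) ^ 2 * zbra (b - a) ^ q
                = zbra (y - a) ^ q * (zbra (y - a) ^ q * zbra (b - a) ^ q) := by ring
              _ ≤ (c2 * zbra (y - b) ^ q) * (zbra (y - a) ^ q * zbra (b - a) ^ q) :=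
                  mul_le_mul_of_nonneg_right h1 (mul_nonneg (hzpos _).le (hzpos _).le)
          linarith
        · -- ⟨a-b⟩ is large
          rw [← zbra_sub_comm b a] at hc
          have h1 : zbra (b - a) ^ q ≤ c2 * zbra (y - b) ^ q := hext _ _ hc
          have : (zbra (y - a) ^ q) ^ 2 * zbra (b - a) ^ q
              ≤ c2 * zbra (y - b) ^ q * (zbra (y - a) ^ q) ^ 2 := by
            calc (zbra (y - a) ^ q) ^ 2 * zbra (b - a) ^ q
                ≤ (zbra (y - a) ^ q) ^ 2 * (c2 * zbra (y - b) ^ q) :=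
                  mul_le_mul_of_nonneg_left h1 (sq_nonneg _)
              _ = c2 * zbra (y - b) ^ q * (zbra (y - a) ^ q) ^ 2 := by ring
          linarith
      have hsum1 : Summable (fun a : Fin d → ℤ =>
          c2 * zbra (y - b) ^ q * (zbra (y - a) ^ q * zbra (b - a) ^ q)) :=
        (hpair_s y b).mul_left _
      have hsum2 : Summable (fun a : Fin d → ℤ =>
          c2 * zbra (y - b) ^ q * (zbra (y - a) ^ q) ^ 2) := (hsqc y).mul_left _
      calc (∑' a, (zbra (y - a) ^ q) ^ 2 * zbra (b - a) ^ q)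
          ≤ ∑' a, (c2 * zbra (y - b) ^ q * (zbra (y - a) ^ q * zbra (b - a) ^ q)
              + c2 * zbra (y - b) ^ q * (zbra (y - a) ^ q) ^ 2) :=
            Summable.tsum_le_tsum hpt (hpsi_s b) (hsum1.add hsum2)
        _ = c2 * zbra (y - b) ^ q * (∑' a, zbra (y - a) ^ q * zbra (b - a) ^ q)
              + c2 * zbra (y - b) ^ q * (∑' a, (zbra (y - a) ^ q) ^ 2) := by
            rw [Summable.tsum_add hsum1 hsum2, tsum_mul_left, tsum_mul_left]
        _ ≤ c2 * zbra (y - b) ^ q * (2 * S) + c2 * zbra (y - b) ^ q * S := by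
            have h2 := mul_le_mul_of_nonneg_left (hpair y b)
              (mul_nonneg hc2.le (hzpos (y - b)).le)
            rw [htsumc y]
            linarith
        _ = 3 * c2 * S * zbra (y - b) ^ q := by ring
    have claimA : ∀ b : Fin d → ℤ,
        (∑' a, zbra (u - a) ^ q * (zbra (y - a) ^ q) ^ 2 * zbra (b - a) ^ q)
          ≤ 7 * c2 ^ 2 * S * (zbra (y - u) ^ q * zbra (y - b) ^ q) := by
      intro b
      have hYb : (0:ℝ) < zbra (y - b) ^ q := hzpos _
      -- pointwise case bound
      have hpt : ∀ a : Fin d → ℤ,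
          zbra (u - a) ^ q * (zbra (y - a) ^ q) ^ 2 * zbra (b - a) ^ q
            ≤ c2 * zbra (y - u) ^ q * ((zbra (y - a) ^ q) ^ 2 * zbra (b - a) ^ q)
              + c2 ^ 2 * (zbra (y - u) ^ q * zbra (y - b) ^ q)
                  * (zbra (u - a) ^ q * zbra (y - a) ^ q)
              + c2 ^ 2 * (zbra (y - u) ^ q * zbra (y - b) ^ q)
                  * (zbra (u - a) ^ q * zbra (b - a) ^ q) := by
        intro a
        have ht1 : 0 ≤ c2 * zbra (y - u) ^ q * ((zbra (y - a) ^ q) ^ 2 * zbra (b - a) ^ q) :=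
          mul_nonneg (mul_nonneg hc2.le hRu.le) (mul_nonneg (sq_nonneg _) (hzpos _).le)
        have ht2 : 0 ≤ c2 ^ 2 * (zbra (y - u) ^ q * zbra (y - b) ^ q)
            * (zbra (u - a) ^ q * zbra (y - a) ^ q) :=
          mul_nonneg (mul_nonneg (sq_nonneg _) (mul_nonneg hRu.le hYb.le))
            (mul_nonneg (hzpos _).le (hzpos _).le)
        have ht3 : 0 ≤ c2 ^ 2 * (zbra (y - u) ^ q * zbra (y - b) ^ q)
            * (zbra (u - a) ^ q * zbra (b - a) ^ q) :=
          mul_nonneg (mul_nonneg (sq_nonneg _) (mul_nonneg hRu.le hYb.le))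
            (mul_nonneg (hzpos _).le (hzpos _).le)
        rcases half_le_or y a u with hc | hc
        · -- ⟨y-a⟩ ≥ ⟨y-u⟩/2
          have h1 : zbra (y - a) ^ q ≤ c2 * zbra (y - u) ^ q := hext _ _ hc
          rcases half_le_or y a b with hc' | hc'
          · -- ⟨y-a⟩ ≥ ⟨y-b⟩/2 : use it twice, keep u-a and b-a
            have h2 : zbra (y - a) ^ q ≤ c2 * zbra (y - b) ^ q := hext _ _ hc'
            have key : zbra (u - a) ^ q * (zbra (y - a) ^ q) ^ 2 * zbra (b - a) ^ q
                ≤ c2 ^ 2 * (zbra (y - u) ^ q * zbra (y - b) ^ q)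
                    * (zbra (u - a) ^ q * zbra (b - a) ^ q) := by
              calc zbra (u - a) ^ q * (zbra (y - a) ^ q) ^ 2 * zbra (b - a) ^ q
                  = (zbra (y - a) ^ q * zbra (y - a) ^ q)
                      * (zbra (u - a) ^ q * zbra (b - a) ^ q) := by ring
                _ ≤ ((c2 * zbra (y - u) ^ q) * (c2 * zbra (y - b) ^ q))
                      * (zbra (u - a) ^ q * zbra (b - a) ^ q) := by
                    refine mul_le_mul_of_nonneg_right ?_
                      (mul_nonneg (hzpos _).le (hzpos _).le)
                    exact mul_le_mul h1 h2 (hzpos _).le (mul_nonneg hc2.le hRu.le)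
                _ = c2 ^ 2 * (zbra (y - u) ^ q * zbra (y - b) ^ q)
                      * (zbra (u - a) ^ q * zbra (b - a) ^ q) := by ring
            linarith
          · -- ⟨a-b⟩ ≥ ⟨y-b⟩/2 : keep u-a and y-a
            rw [← zbra_sub_comm b a] at hc'
            have h2 : zbra (b - a) ^ q ≤ c2 * zbra (y - b) ^ q := hext _ _ hc'
            have key : zbra (u - a) ^ q * (zbra (y - a) ^ q) ^ 2 * zbra (b - a) ^ q
                ≤ c2 ^ 2 * (zbra (y - u) ^ q * zbra (y - b) ^ q)
                    * (zbra (u - a) ^ q * zbra (y - a) ^ q) := by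
              calc zbra (u - a) ^ q * (zbra (y - a) ^ q) ^ 2 * zbra (b - a) ^ q
                  = (zbra (y - a) ^ q * zbra (b - a) ^ q)
                      * (zbra (u - a) ^ q * zbra (y - a) ^ q) := by ring
                _ ≤ ((c2 * zbra (y - u) ^ q) * (c2 * zbra (y - b) ^ q))
                      * (zbra (u - a) ^ q * zbra (y - a) ^ q) := by
                    refine mul_le_mul_of_nonneg_right ?_
                      (mul_nonneg (hzpos _).le (hzpos _).le)
                    exact mul_le_mul h1 h2 (hzpos _).le (mul_nonneg hc2.le hRu.le)
                _ = c2 ^ 2 * (zbra (y - u) ^ q * zbra (y - b) ^ q)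
                      * (zbra (u - a) ^ q * zbra (y - a) ^ q) := by ring
            linarith
        · -- ⟨u-a⟩ ≥ ⟨y-u⟩/2
          rw [← zbra_sub_comm u a] at hc
          have h1 : zbra (u - a) ^ q ≤ c2 * zbra (y - u) ^ q := hext _ _ hc
          have key : zbra (u - a) ^ q * (zbra (y - a) ^ q) ^ 2 * zbra (b - a) ^ q
              ≤ c2 * zbra (y - u) ^ q * ((zbra (y - a) ^ q) ^ 2 * zbra (b - a) ^ q) := by
            calc zbra (u - a) ^ q * (zbra (y - a) ^ q) ^ 2 * zbra (b - a) ^ q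
                = zbra (u - a) ^ q * ((zbra (y - a) ^ q) ^ 2 * zbra (b - a) ^ q) := by ring
              _ ≤ (c2 * zbra (y - u) ^ q) * ((zbra (y - a) ^ q) ^ 2 * zbra (b - a) ^ q) :=
                  mul_le_mul_of_nonneg_right h1
                    (mul_nonneg (sq_nonneg _) (hzpos _).le)
          linarith
      -- summability of the three pieces
      have h1s : Summable (fun a : Fin d → ℤ =>
          c2 * zbra (y - u) ^ q * ((zbra (y - a) ^ q) ^ 2 * zbra (b - a) ^ q)) :=
        (hpsi_s b).mul_left _
      have h2s : Summable (fun a : Fin d → ℤ =>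
          c2 ^ 2 * (zbra (y - u) ^ q * zbra (y - b) ^ q)
            * (zbra (u - a) ^ q * zbra (y - a) ^ q)) := (hpair_s u y).mul_left _
      have h3s : Summable (fun a : Fin d → ℤ =>
          c2 ^ 2 * (zbra (y - u) ^ q * zbra (y - b) ^ q)
            * (zbra (u - a) ^ q * zbra (b - a) ^ q)) := (hpair_s u b).mul_left _
      calc (∑' a, zbra (u - a) ^ q * (zbra (y - a) ^ q) ^ 2 * zbra (b - a) ^ q)
          ≤ ∑' a, (c2 * zbra (y - u) ^ q * ((zbra (y - a) ^ q) ^ 2 * zbra (b - a) ^ q)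
              + c2 ^ 2 * (zbra (y - u) ^ q * zbra (y - b) ^ q)
                  * (zbra (u - a) ^ q * zbra (y - a) ^ q)
              + c2 ^ 2 * (zbra (y - u) ^ q * zbra (y - b) ^ q)
                  * (zbra (u - a) ^ q * zbra (b - a) ^ q)) :=
            Summable.tsum_le_tsum hpt (claimA_s b) ((h1s.add h2s).add h3s)
        _ = c2 * zbra (y - u) ^ q * (∑' a, (zbra (y - a) ^ q) ^ 2 * zbra (b - a) ^ q)
              + c2 ^ 2 * (zbra (y - u) ^ q * zbra (y - b) ^ q)
                  * (∑' a, zbra (u - a) ^ q * zbra (y - a) ^ q)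
              + c2 ^ 2 * (zbra (y - u) ^ q * zbra (y - b) ^ q)
                  * (∑' a, zbra (u - a) ^ q * zbra (b - a) ^ q) := by
            rw [Summable.tsum_add (h1s.add h2s) h3s, Summable.tsum_add h1s h2s,
              tsum_mul_left, tsum_mul_left, tsum_mul_left]
        _ ≤ c2 * zbra (y - u) ^ q * (3 * c2 * S * zbra (y - b) ^ q)
              + c2 ^ 2 * (zbra (y - u) ^ q * zbra (y - b) ^ q) * (2 * S)
              + c2 ^ 2 * (zbra (y - u) ^ q * zbra (y - b) ^ q) * (2 * S) := by
            have e1 := mul_le_mul_of_nonneg_left (claimA1 b) (mul_nonneg hc2.le hRu.le)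
            have e2 := mul_le_mul_of_nonneg_left (hpair u y)
              (mul_nonneg (sq_nonneg c2) (mul_nonneg hRu.le hYb.le))
            have e3 := mul_le_mul_of_nonneg_left (hpair u b)
              (mul_nonneg (sq_nonneg c2) (mul_nonneg hRu.le hYb.le))
            linarith
        _ = 7 * c2 ^ 2 * S * (zbra (y - u) ^ q * zbra (y - b) ^ q) := by ring
    -- Claim B : sum over b of the outer weights
    have hw_s : Summable (fun b : Fin d → ℤ =>
        (zbra (v - b) ^ q) ^ 2 * (zbra (y - b) ^ q) ^ 2) := by
      refine Summable.of_nonneg_of_le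
        (fun b => mul_nonneg (sq_nonneg _) (sq_nonneg _)) (fun b => ?_) (hsqc v)
      refine mul_le_of_le_one_right (sq_nonneg _) ?_
      exact pow_le_one₀ (hzpos _).le (hzle1 _)
    have claimB : (∑' b, (zbra (v - b) ^ q) ^ 2 * (zbra (y - b) ^ q) ^ 2)
        ≤ 2 * c2 ^ 2 * S * (zbra (y - v) ^ q) ^ 2 := by
      have hptB : ∀ b : Fin d → ℤ,
          (zbra (v - b) ^ q) ^ 2 * (zbra (y - b) ^ q) ^ 2
            ≤ c2 ^ 2 * (zbra (y - v) ^ q) ^ 2 * (zbra (y - b) ^ q) ^ 2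
              + c2 ^ 2 * (zbra (y - v) ^ q) ^ 2 * (zbra (v - b) ^ q) ^ 2 := by
        intro b
        have hn1 : 0 ≤ c2 ^ 2 * (zbra (y - v) ^ q) ^ 2 * (zbra (y - b) ^ q) ^ 2 :=
          mul_nonneg (mul_nonneg (sq_nonneg _) (sq_nonneg _)) (sq_nonneg _)
        have hn2 : 0 ≤ c2 ^ 2 * (zbra (y - v) ^ q) ^ 2 * (zbra (v - b) ^ q) ^ 2 :=
          mul_nonneg (mul_nonneg (sq_nonneg _) (sq_nonneg _)) (sq_nonneg _)
        rcases half_le_or y b v with hc | hc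
        · -- ⟨y-b⟩ large
          have h1 : zbra (y - b) ^ q ≤ c2 * zbra (y - v) ^ q := hext _ _ hc
          have h2 : (zbra (y - b) ^ q) ^ 2 ≤ c2 ^ 2 * (zbra (y - v) ^ q) ^ 2 := by
            have := mul_self_le_mul_self (hzpos (y - b)).le h1
            calc (zbra (y - b) ^ q) ^ 2 = zbra (y - b) ^ q * zbra (y - b) ^ q := sq _
              _ ≤ (c2 * zbra (y - v) ^ q) * (c2 * zbra (y - v) ^ q) := this
              _ = c2 ^ 2 * (zbra (y - v) ^ q) ^ 2 := by ring
          have : (zbra (v - b) ^ q) ^ 2 * (zbra (y - b) ^ q) ^ 2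
              ≤ c2 ^ 2 * (zbra (y - v) ^ q) ^ 2 * (zbra (v - b) ^ q) ^ 2 := by
            calc (zbra (v - b) ^ q) ^ 2 * (zbra (y - b) ^ q) ^ 2
                ≤ (zbra (v - b) ^ q) ^ 2 * (c2 ^ 2 * (zbra (y - v) ^ q) ^ 2) :=
                  mul_le_mul_of_nonneg_left h2 (sq_nonneg _)
              _ = c2 ^ 2 * (zbra (y - v) ^ q) ^ 2 * (zbra (v - b) ^ q) ^ 2 := by ring
          linarith
        · -- ⟨b-v⟩ large
          rw [← zbra_sub_comm v b] at hc
          have h1 : zbra (v - b) ^ q ≤ c2 * zbra (y - v) ^ q := hext _ _ hc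
          have h2 : (zbra (v - b) ^ q) ^ 2 ≤ c2 ^ 2 * (zbra (y - v) ^ q) ^ 2 := by
            have := mul_self_le_mul_self (hzpos (v - b)).le h1
            calc (zbra (v - b) ^ q) ^ 2 = zbra (v - b) ^ q * zbra (v - b) ^ q := sq _
              _ ≤ (c2 * zbra (y - v) ^ q) * (c2 * zbra (y - v) ^ q) := this
              _ = c2 ^ 2 * (zbra (y - v) ^ q) ^ 2 := by ring
          have : (zbra (v - b) ^ q) ^ 2 * (zbra (y - b) ^ q) ^ 2
              ≤ c2 ^ 2 * (zbra (y - v) ^ q) ^ 2 * (zbra (y - b) ^ q) ^ 2 := by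
            calc (zbra (v - b) ^ q) ^ 2 * (zbra (y - b) ^ q) ^ 2
                ≤ (c2 ^ 2 * (zbra (y - v) ^ q) ^ 2) * (zbra (y - b) ^ q) ^ 2 :=
                  mul_le_mul_of_nonneg_right h2 (sq_nonneg _)
              _ = c2 ^ 2 * (zbra (y - v) ^ q) ^ 2 * (zbra (y - b) ^ q) ^ 2 := by ring
          linarith
      have hB1s : Summable (fun b : Fin d → ℤ =>
          c2 ^ 2 * (zbra (y - v) ^ q) ^ 2 * (zbra (y - b) ^ q) ^ 2) := (hsqc y).mul_left _
      have hB2s : Summable (fun b : Fin d → ℤ =>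
          c2 ^ 2 * (zbra (y - v) ^ q) ^ 2 * (zbra (v - b) ^ q) ^ 2) := (hsqc v).mul_left _
      calc (∑' b, (zbra (v - b) ^ q) ^ 2 * (zbra (y - b) ^ q) ^ 2)
          ≤ ∑' b, (c2 ^ 2 * (zbra (y - v) ^ q) ^ 2 * (zbra (y - b) ^ q) ^ 2
              + c2 ^ 2 * (zbra (y - v) ^ q) ^ 2 * (zbra (v - b) ^ q) ^ 2) :=
            Summable.tsum_le_tsum hptB hw_s (hB1s.add hB2s)
        _ = c2 ^ 2 * (zbra (y - v) ^ q) ^ 2 * (∑' b, (zbra (y - b) ^ q) ^ 2)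
              + c2 ^ 2 * (zbra (y - v) ^ q) ^ 2 * (∑' b, (zbra (v - b) ^ q) ^ 2) := by
            rw [Summable.tsum_add hB1s hB2s, tsum_mul_left, tsum_mul_left]
        _ = 2 * c2 ^ 2 * S * (zbra (y - v) ^ q) ^ 2 := by
            rw [htsumc y, htsumc v]; ring
    -- assembly via Fubini
    have hswap : Summable (fun p : (Fin d → ℤ) × (Fin d → ℤ) => F (p.2, p.1)) :=
      (Equiv.prodComm (Fin d → ℤ) (Fin d → ℤ)).summable_iff.2 hFsum
    have htp : ∑' p, F p = ∑' (b : Fin d → ℤ), ∑' (a : Fin d → ℤ), F (a, b) := by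
      rw [← (Equiv.prodComm (Fin d → ℤ) (Fin d → ℤ)).tsum_eq F]
      exact Summable.tsum_prod' hswap (fun b => hswap.prod_factor b)
    have hinner : ∀ b : Fin d → ℤ, (∑' a, F (a, b))
        = (∑' a, zbra (u - a) ^ q * (zbra (y - a) ^ q) ^ 2 * zbra (b - a) ^ q)
            * ((zbra (v - b) ^ q) ^ 2 * zbra (y - b) ^ q) := by
      intro b
      rw [← tsum_mul_right]
      congr 1
      funext a
      simp only [hFdef]
      ring
    have houter : ∀ b : Fin d → ℤ, (∑' a, F (a, b))
        ≤ (7 * c2 ^ 2 * S * zbra (y - u) ^ q)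
            * ((zbra (v - b) ^ q) ^ 2 * (zbra (y - b) ^ q) ^ 2) := by
      intro b
      rw [hinner b]
      calc (∑' a, zbra (u - a) ^ q * (zbra (y - a) ^ q) ^ 2 * zbra (b - a) ^ q)
            * ((zbra (v - b) ^ q) ^ 2 * zbra (y - b) ^ q)
          ≤ (7 * c2 ^ 2 * S * (zbra (y - u) ^ q * zbra (y - b) ^ q))
            * ((zbra (v - b) ^ q) ^ 2 * zbra (y - b) ^ q) := by
            refine mul_le_mul_of_nonneg_right (claimA b) ?_
            exact mul_nonneg (sq_nonneg _) (hzpos _).le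
        _ = (7 * c2 ^ 2 * S * zbra (y - u) ^ q)
            * ((zbra (v - b) ^ q) ^ 2 * (zbra (y - b) ^ q) ^ 2) := by ring
    have hgsum : Summable (fun b : Fin d → ℤ => ∑' a, F (a, b)) := by
      have h1 := HasSum.prod_fiberwise hswap.hasSum
        (fun b => (hswap.prod_factor b).hasSum)
      exact h1.summable
    have houter_s : Summable (fun b : Fin d → ℤ =>
        (7 * c2 ^ 2 * S * zbra (y - u) ^ q)
          * ((zbra (v - b) ^ q) ^ 2 * (zbra (y - b) ^ q) ^ 2)) := hw_s.mul_left _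
    calc ∑' p, F p = ∑' (b : Fin d → ℤ), ∑' (a : Fin d → ℤ), F (a, b) := htp
      _ ≤ ∑' b, (7 * c2 ^ 2 * S * zbra (y - u) ^ q)
            * ((zbra (v - b) ^ q) ^ 2 * (zbra (y - b) ^ q) ^ 2) :=
          Summable.tsum_le_tsum houter hgsum houter_s
      _ = (7 * c2 ^ 2 * S * zbra (y - u) ^ q)
            * ∑' b, ((zbra (v - b) ^ q) ^ 2 * (zbra (y - b) ^ q) ^ 2) := tsum_mul_left
      _ ≤ (7 * c2 ^ 2 * S * zbra (y - u) ^ q) * (2 * c2 ^ 2 * S * (zbra (y - v) ^ q) ^ 2) := by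
          refine mul_le_mul_of_nonneg_left claimB ?_
          exact mul_nonneg (mul_nonneg (mul_nonneg (by norm_num) (sq_nonneg _)) hSpos.le) hRu.le
      _ = 14 * c2 ^ 4 * S ^ 2 * zbra (y - u) ^ q * (zbra (y - v) ^ q) ^ 2 := by ring
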